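/- (Theorem 4.1, equivalence (1)⇔(2).) Let f : B_Δ → ℂ be a function. Then f ∈ S_{2,gen}(B_Δ) if and only if the following holds for every pair of distinct points z_1, z_2 ∈ B_Δ: for every positive semidefinite 2×2 complex matrix (k_{ij})_{i,j=1,2} with the property that for all vectors ξ_1, ξ_2 ∈ ℂ^r the 2×2 matrix with (i,j)-entry (⟨ξ_i, ξ_j⟩ − ⟨Δ(z_i)ξ_i, Δ(z_j)ξ_j⟩)·k_{ij} is positive semidefinite, the 2×2 matrix with (i,j)-entry (1 − conj(f(z_j))·f(z_i))·k_{ij} is also positive semidefinite. -/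

import Mathlib

open scoped Matrix.Norms.L2Operator ComplexOrder
open Matrix

noncomputable section

/-- The positive semidefinite square root of a positive semidefinite matrix (removed from
Mathlib; restored with its old definition). -/
def Matrix.PosSemidef.sqrt {n' : Type*} [Fintype n'] [DecidableEq n'] {M : Matrix n' n' ℂ}
    (hA : M.PosSemidef) : Matrix n' n' ℂ :=
  (hA.1.eigenvectorUnitary : Matrix n' n' ℂ) *
    diagonal (fun i => ((√(hA.1.eigenvalues i) : ℝ) : ℂ)) *
    (star hA.1.eigenvectorUnitary : Matrix n' n' ℂ)

open scoped Classical in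
/-- Square root of a positive semidefinite matrix (junk value `0` otherwise). -/
def msqrt {n' : Type*} [Fintype n'] [DecidableEq n'] (M : Matrix n' n' ℂ) : Matrix n' n' ℂ :=
  if h : M.PosSemidef then h.sqrt else 0

/-- The pseudo-distance `d_Δ`. -/
def dDelta {α m' n' : Type*} [Fintype m'] [Fintype n'] [DecidableEq m'] [DecidableEq n']
    (Δ : α → Matrix m' n' ℂ) (z w : α) : ℝ :=
  ‖(msqrt (1 - Δ w * (Δ w)ᴴ))⁻¹ * ((Δ z - Δ w) *
      ((1 - (Δ w)ᴴ * Δ z)⁻¹ * msqrt (1 - (Δ w)ᴴ * Δ w)))‖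

/-- `B_Δ = {z ∈ E : ‖Δ(z)‖ < 1}`. -/
def BDelta {α m' n' : Type*} [Fintype m'] [Fintype n'] [DecidableEq n'] (E : Set α)
    (Δ : α → Matrix m' n' ℂ) : Set α :=
  {z | z ∈ E ∧ ‖Δ z‖ < 1}

/-- pseudo-hyperbolic distance on the unit disk -/
def dDisk (a b : ℂ) : ℝ := ‖a - b‖ / ‖1 - (starRingEnd ℂ) b * a‖

/-- elementary tensor `ξ ⊗ v` in `ℂ^m ⊗ ℂ^2`, realized as a function on `m × Fin 2` -/
def tpr {m' : Type*} (ξ : m' → ℂ) (v : Fin 2 → ℂ) : m' × Fin 2 → ℂ :=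
  fun p => ξ p.1 * v p.2

/-- inner product, conjugate-linear in the second variable -/
def herm {m' : Type*} [Fintype m'] (ξ η : m' → ℂ) : ℂ :=
  ∑ p, ξ p * (starRingEnd ℂ) (η p)

/-- positive semidefiniteness of a `2 × 2` kernel `(a i j)` -/
def PSD2 (a : Fin 2 → Fin 2 → ℂ) : Prop :=
  ∀ c : Fin 2 → ℂ, 0 ≤ ∑ i, ∑ j, a i j * c i * (starRingEnd ℂ) (c j)

/-- `T` is a generic tuple with joint eigenvectors `v` and joint eigenvalues `z 0 ≠ z 1`. -/
def IsGenericTuple {d : ℕ} (T : Fin d → Matrix (Fin 2) (Fin 2) ℂ)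
    (v : Fin 2 → Fin 2 → ℂ) (z : Fin 2 → Fin d → ℂ) : Prop :=
  LinearIndependent ℂ v ∧ z 0 ≠ z 1 ∧ ∀ i j, T i *ᵥ v j = z j i • v j

/-- `‖Δ(T)‖ ≤ 1`, where `Δ(T)` is the matrix on `ℂ^s ⊗ ℂ^2` determined by
`Δ(T)(e_i ⊗ v_j) = (Δ(z_j) e_i) ⊗ v_j`. -/
def DeltaTContract {β : Type*} {s r : ℕ} (Δ : β → Matrix (Fin s) (Fin r) ℂ)
    (v : Fin 2 → Fin 2 → ℂ) (z : Fin 2 → β) : Prop :=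
  ∀ DT : Matrix (Fin s × Fin 2) (Fin r × Fin 2) ℂ,
    (∀ (i : Fin r) (j : Fin 2),
      DT *ᵥ tpr (Pi.single i 1) (v j) = tpr (Δ (z j) *ᵥ Pi.single i 1) (v j)) →
    ‖DT‖ ≤ 1

/-- membership in the class `S_{2,gen}(B_Δ)` -/
def MemS2gen {d s r : ℕ} (E : Set (Fin d → ℂ)) (Δ : (Fin d → ℂ) → Matrix (Fin s) (Fin r) ℂ)
    (f : (Fin d → ℂ) → ℂ) : Prop :=
  ∀ (T : Fin d → Matrix (Fin 2) (Fin 2) ℂ) (v : Fin 2 → Fin 2 → ℂ) (z : Fin 2 → Fin d → ℂ),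
    IsGenericTuple T v z → (∀ j, z j ∈ BDelta E Δ) → DeltaTContract Δ v z →
    ∀ fT : Matrix (Fin 2) (Fin 2) ℂ, (∀ j, fT *ᵥ v j = f (z j) • v j) → ‖fT‖ ≤ 1

/-- the Möbius pseudo-distance of a domain `Ω` -/
def dMobius {α : Type*} [NormedAddCommGroup α] [NormedSpace ℂ α] (Ω : Set α) (z w : α) : ℝ :=
  sSup {x | ∃ g : α → ℂ, DifferentiableOn ℂ g Ω ∧ (∀ ζ ∈ Ω, ‖g ζ‖ < 1) ∧ x = dDisk (g z) (g w)}

/-- `Ω` is a complete spectral domain for the diagonalizable tuple with eigenvectors `v` and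
joint eigenvalues `z 0, z 1`. -/
def IsCompleteSpectralDomainFor {α : Type*} [NormedAddCommGroup α] [NormedSpace ℂ α]
    (Ω : Set α) (v : Fin 2 → Fin 2 → ℂ) (z : Fin 2 → α) : Prop :=
  ∀ (n : ℕ) (F : α → Matrix (Fin n) (Fin n) ℂ),
    (∀ i j, DifferentiableOn ℂ (fun ζ => F ζ i j) Ω) →
    ∀ C : ℝ, (∀ ζ ∈ Ω, ‖F ζ‖ ≤ C) →
    ∀ FT : Matrix (Fin n × Fin 2) (Fin n × Fin 2) ℂ,
      (∀ (ξ : Fin n → ℂ) (j : Fin 2), FT *ᵥ tpr ξ (v j) = tpr (F (z j) *ᵥ ξ) (v j)) →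
      ‖FT‖ ≤ C


/-! ### Auxiliary machinery -/

open scoped Kronecker

local notation "conj'" => starRingEnd ℂ

/-- squared euclidean norm -/
def nsq {m' : Type*} [Fintype m'] (x : m' → ℂ) : ℝ := ∑ p, ‖x p‖ ^ 2

lemma nsq_nonneg {m' : Type*} [Fintype m'] (x : m' → ℂ) : 0 ≤ nsq x :=
  Finset.sum_nonneg fun _ _ => sq_nonneg _

lemma herm_self {m' : Type*} [Fintype m'] (x : m' → ℂ) : herm x x = (nsq x : ℂ) := by
  unfold herm nsq
  push_cast
  refine Finset.sum_congr rfl fun p _ => ?_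
  rw [Complex.mul_conj, Complex.normSq_eq_norm_sq]
  norm_cast

lemma euclid_norm_sq {m' : Type*} [Fintype m'] (x : m' → ℂ) :
    ‖(WithLp.equiv 2 (m' → ℂ)).symm x‖ ^ 2 = nsq x := by
  rw [EuclideanSpace.norm_eq]
  rw [Real.sq_sqrt (Finset.sum_nonneg fun _ _ => sq_nonneg _)]
  rfl

lemma mulVec_nsq_le {m' n' : Type*} [Fintype m'] [Fintype n'] [DecidableEq m'] [DecidableEq n']
    (A : Matrix m' n' ℂ) (hA : ‖A‖ ≤ 1) (x : n' → ℂ) : nsq (A *ᵥ x) ≤ nsq x := by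
  have h := Matrix.l2_opNorm_mulVec A ((WithLp.equiv 2 (n' → ℂ)).symm x)
  rw [← euclid_norm_sq (A *ᵥ x), ← euclid_norm_sq x]
  have h2 : ‖(EuclideanSpace.equiv m' ℂ).symm (A *ᵥ x)‖ ≤ ‖(WithLp.equiv 2 (n' → ℂ)).symm x‖ := by
    calc ‖(EuclideanSpace.equiv m' ℂ).symm (A *ᵥ x)‖ ≤ ‖A‖ * ‖(WithLp.equiv 2 (n' → ℂ)).symm x‖ := h
    _ ≤ 1 * ‖(WithLp.equiv 2 (n' → ℂ)).symm x‖ := by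
        exact mul_le_mul_of_nonneg_right hA (norm_nonneg _)
    _ = _ := one_mul _
  have := pow_le_pow_left₀ (norm_nonneg _) h2 2
  exact this

lemma norm_le_one_of_nsq {m' n' : Type*}
    [Fintype m'] [Fintype n'] [DecidableEq m'] [DecidableEq n']
    (A : Matrix m' n' ℂ) (h : ∀ x : n' → ℂ, nsq (A *ᵥ x) ≤ nsq x) : ‖A‖ ≤ 1 := by
  rw [Matrix.l2_opNorm_def]
  refine ContinuousLinearMap.opNorm_le_bound _ zero_le_one fun x => ?_
  rw [one_mul]
  have hx : x = (WithLp.equiv 2 (n' → ℂ)).symm ((WithLp.equiv 2 (n' → ℂ)) x) := rfl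
  calc ‖(Matrix.toEuclideanLin.trans LinearMap.toContinuousLinearMap) A x‖
      = ‖(WithLp.equiv 2 (m' → ℂ)).symm (A *ᵥ (WithLp.equiv 2 (n' → ℂ)) x)‖ := rfl
    _ ≤ ‖x‖ := by
        have h1 := euclid_norm_sq (A *ᵥ (WithLp.equiv 2 (n' → ℂ)) x)
        have h2 := euclid_norm_sq ((WithLp.equiv 2 (n' → ℂ)) x)
        have h3 := h ((WithLp.equiv 2 (n' → ℂ)) x)
        have h4 : ‖(WithLp.equiv 2 (m' → ℂ)).symm (A *ᵥ (WithLp.equiv 2 (n' → ℂ)) x)‖ ^ 2 ≤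
            ‖(WithLp.equiv 2 (n' → ℂ)).symm ((WithLp.equiv 2 (n' → ℂ)) x)‖ ^ 2 := by
          rw [h1, h2]; exact h3
        have h5 := Real.sqrt_le_sqrt h4
        rw [Real.sqrt_sq (norm_nonneg _), Real.sqrt_sq (norm_nonneg _)] at h5
        exact h5

section HermAPI

variable {ι κ : Type*} [Fintype ι] [Fintype κ]

lemma herm_sum_left {n : ℕ} (x : Fin n → ι → ℂ) (y : ι → ℂ) :
    herm (fun p => ∑ i, x i p) y = ∑ i, herm (x i) y := by
  unfold herm
  rw [Finset.sum_comm]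
  exact Finset.sum_congr rfl fun p _ => by rw [Finset.sum_mul]

lemma herm_sum_right {n : ℕ} (x : ι → ℂ) (y : Fin n → ι → ℂ) :
    herm x (fun p => ∑ j, y j p) = ∑ j, herm x (y j) := by
  unfold herm
  rw [Finset.sum_comm]
  exact Finset.sum_congr rfl fun p _ => by rw [map_sum, Finset.mul_sum]

lemma herm_smul_left (a : ℂ) (x y : ι → ℂ) :
    herm (fun p => a * x p) y = a * herm x y := by
  unfold herm; rw [Finset.mul_sum]; exact Finset.sum_congr rfl fun p _ => by ring

lemma herm_smul_right (a : ℂ) (x y : ι → ℂ) :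
    herm x (fun p => a * y p) = conj' a * herm x y := by
  unfold herm; rw [Finset.mul_sum]
  exact Finset.sum_congr rfl fun p _ => by rw [_root_.map_mul]; ring

lemma herm_tpr_tpr (x x' : ι → ℂ) (w w' : Fin 2 → ℂ) :
    herm (tpr x w) (tpr x' w') = herm x x' * herm w w' := by
  unfold herm tpr
  rw [Fintype.sum_prod_type, Finset.sum_mul_sum]
  exact Finset.sum_congr rfl fun p1 _ => Finset.sum_congr rfl fun p2 _ => by
    rw [_root_.map_mul]; ring

/-- Gram expansion for a single space -/
lemma gram_expand (v : Fin 2 → κ → ℂ) (c : Fin 2 → ℂ) :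
    ∑ i, ∑ j, herm (v i) (v j) * c i * conj' (c j)
      = herm (fun q => ∑ j, c j * v j q) (fun q => ∑ j, c j * v j q) := by
  rw [herm_sum_left]
  refine Finset.sum_congr rfl fun i _ => ?_
  rw [herm_sum_right]
  refine Finset.sum_congr rfl fun j _ => ?_
  rw [herm_smul_left, herm_smul_right]; ring

/-- tensor Gram expansion -/
lemma gram_expand2 (ξ : Fin 2 → ι → ℂ) (v : Fin 2 → Fin 2 → ℂ) (c : Fin 2 → ℂ) :
    ∑ i, ∑ j, herm (ξ i) (ξ j) * herm (v i) (v j) * c i * conj' (c j)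
      = herm (fun p : ι × Fin 2 => ∑ j, c j * tpr (ξ j) (v j) p)
             (fun p : ι × Fin 2 => ∑ j, c j * tpr (ξ j) (v j) p) := by
  rw [herm_sum_left]
  refine Finset.sum_congr rfl fun i _ => ?_
  rw [herm_sum_right]
  refine Finset.sum_congr rfl fun j _ => ?_
  rw [herm_smul_left, herm_smul_right, herm_tpr_tpr]; ring

end HermAPI

lemma kron_mulVec_tpr {s' r' : ℕ} (A : Matrix (Fin s') (Fin r') ℂ)
    (B : Matrix (Fin 2) (Fin 2) ℂ) (ξ : Fin r' → ℂ) (w : Fin 2 → ℂ) :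
    (A ⊗ₖ B) *ᵥ tpr ξ w = tpr (A *ᵥ ξ) (B *ᵥ w) := by
  funext p
  simp only [Matrix.mulVec, tpr, dotProduct, kroneckerMap_apply, Fintype.sum_prod_type]
  rw [Finset.sum_mul_sum]
  exact Finset.sum_congr rfl fun q1 _ => Finset.sum_congr rfl fun q2 _ => by ring

lemma vecMulVec_mulVec' {n' : Type*} [Fintype n'] (w : Fin 2 → ℂ) (u : n' → ℂ) (x : n' → ℂ) :
    vecMulVec w u *ᵥ x = (∑ q, u q * x q) • w := by
  funext i
  simp only [Matrix.mulVec, dotProduct, vecMulVec_apply, Pi.smul_apply, smul_eq_mul,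
    Finset.sum_mul, Finset.mul_sum]
  exact Finset.sum_congr rfl fun q _ => by ring

lemma tpr_decomp {r' : ℕ} (ξ : Fin r' → ℂ) (w : Fin 2 → ℂ) :
    tpr ξ w = ∑ i, ξ i • tpr (Pi.single i 1) w := by
  funext p
  simp only [Finset.sum_apply, Pi.smul_apply, tpr, smul_eq_mul, Pi.single_apply]
  simp only [ite_mul, one_mul, zero_mul, mul_ite, mul_zero]
  rw [Finset.sum_ite_eq Finset.univ p.1 (fun i => ξ i * w p.2)]
  simp

lemma tpr_smul_right {r' : ℕ} (ξ : Fin r' → ℂ) (a : ℂ) (w : Fin 2 → ℂ) :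
    tpr ξ (a • w) = a • tpr ξ w := by
  funext p
  simp only [tpr, Pi.smul_apply, smul_eq_mul]
  ring

/-- existence of an intertwining matrix `DT` -/
lemma exists_DT {β : Type*} {s' r' : ℕ} (Δ : β → Matrix (Fin s') (Fin r') ℂ)
    (v : Fin 2 → Fin 2 → ℂ) (hv : LinearIndependent ℂ v) (z : Fin 2 → β) :
    ∃ DT : Matrix (Fin s' × Fin 2) (Fin r' × Fin 2) ℂ,
      ∀ (ξ : Fin r' → ℂ) (j : Fin 2), DT *ᵥ tpr ξ (v j) = tpr (Δ (z j) *ᵥ ξ) (v j) := by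
  set P : Matrix (Fin 2) (Fin 2) ℂ := Matrix.of fun q j => v j q with hPdef
  have hA : LinearIndependent ℂ (fun i => Pᵀ i) := by
    convert hv using 1
    rfl
  have hP : IsUnit P := Matrix.linearIndependent_cols_iff_isUnit.mp hA
  have hdet : IsUnit P.det := (Matrix.isUnit_iff_isUnit_det P).mp hP
  have hPP : P⁻¹ * P = 1 := Matrix.nonsing_inv_mul P hdet
  refine ⟨∑ j, (Δ (z j)) ⊗ₖ vecMulVec (v j) (fun q => P⁻¹ j q), fun ξ j => ?_⟩
  have hsum : ∀ x, (∑ j, (Δ (z j)) ⊗ₖ vecMulVec (v j) (fun q => P⁻¹ j q)) *ᵥ x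
      = ∑ j, ((Δ (z j)) ⊗ₖ vecMulVec (v j) (fun q => P⁻¹ j q)) *ᵥ x := by
    intro x
    rw [Fin.sum_univ_two, Fin.sum_univ_two, Matrix.add_mulVec]
  rw [hsum]
  have hB : ∀ j', vecMulVec (v j') (fun q => P⁻¹ j' q) *ᵥ v j = ((P⁻¹ * P) j' j) • v j' := by
    intro j'
    rw [vecMulVec_mulVec', Matrix.mul_apply]
    rfl
  have hterm : ∀ j', ((Δ (z j')) ⊗ₖ vecMulVec (v j') (fun q => P⁻¹ j' q)) *ᵥ tpr ξ (v j)
      = ((1 : Matrix (Fin 2) (Fin 2) ℂ) j' j) • tpr (Δ (z j') *ᵥ ξ) (v j') := by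
    intro j'
    rw [kron_mulVec_tpr, hB, hPP, tpr_smul_right]
  rw [Fin.sum_univ_two, hterm 0, hterm 1]
  fin_cases j <;> simp [Matrix.one_apply]


lemma zero_le_sub_real {a b : ℝ} (h : b ≤ a) : (0:ℂ) ≤ (a:ℂ) - (b:ℂ) := by
  rw [← Complex.ofReal_sub]
  exact Complex.zero_le_real.mpr (by linarith)

lemma sub_real_nonneg {a b : ℝ} (h : (0:ℂ) ≤ (a:ℂ) - (b:ℂ)) : b ≤ a := by
  rw [← Complex.ofReal_sub] at h
  have := Complex.zero_le_real.mp h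
  linarith

lemma dir_mpr {d s r : ℕ} (E : Set (Fin d → ℂ))
    (Δ : (Fin d → ℂ) → Matrix (Fin s) (Fin r) ℂ) (f : (Fin d → ℂ) → ℂ)
    (h : ∀ zz : Fin 2 → (Fin d → ℂ), (∀ j, zz j ∈ BDelta E Δ) → zz 0 ≠ zz 1 →
        ∀ k : Fin 2 → Fin 2 → ℂ, PSD2 k →
          (∀ ξ : Fin 2 → (Fin r → ℂ),
            PSD2 fun i j =>
              (herm (ξ i) (ξ j) - herm (Δ (zz i) *ᵥ ξ i) (Δ (zz j) *ᵥ ξ j)) * k i j) →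
          PSD2 fun i j => (1 - conj' (f (zz j)) * f (zz i)) * k i j) :
    MemS2gen E Δ f := by
  rintro T v z ⟨hli, hne, hTv⟩ hz hDT fT hfT
  have hk : PSD2 (fun i j => herm (v i) (v j)) := by
    intro c
    calc (0:ℂ) ≤ (nsq (fun q => ∑ j, c j * v j q) : ℂ) := Complex.zero_le_real.mpr (nsq_nonneg _)
      _ = ∑ i, ∑ j, herm (v i) (v j) * c i * conj' (c j) := by
          rw [← herm_self, ← gram_expand v c]
  have hadm : ∀ ξ : Fin 2 → (Fin r → ℂ), PSD2 fun i j =>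
      (herm (ξ i) (ξ j) - herm (Δ (z i) *ᵥ ξ i) (Δ (z j) *ᵥ ξ j)) * herm (v i) (v j) := by
    intro ξ c
    obtain ⟨DT, hDTp⟩ := exists_DT Δ v hli z
    have hDTn : ‖DT‖ ≤ 1 := hDT DT fun i j => hDTp _ j
    set X : Fin r × Fin 2 → ℂ := fun p => ∑ j, c j * tpr (ξ j) (v j) p with hX
    set Y : Fin s × Fin 2 → ℂ := fun p => ∑ j, c j * tpr (Δ (z j) *ᵥ ξ j) (v j) p with hY
    have hXY : DT *ᵥ X = Y := by
      have hXs : X = c 0 • tpr (ξ 0) (v 0) + c 1 • tpr (ξ 1) (v 1) := by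
        funext p; simp [hX, Fin.sum_univ_two]
      rw [hXs, Matrix.mulVec_add, Matrix.mulVec_smul, Matrix.mulVec_smul,
        hDTp (ξ 0) 0, hDTp (ξ 1) 1]
      funext p; simp [hY, Fin.sum_univ_two]
    have h1 : nsq Y ≤ nsq X := by rw [← hXY]; exact mulVec_nsq_le DT hDTn X
    have e1 : ∑ i, ∑ j, herm (ξ i) (ξ j) * herm (v i) (v j) * c i * conj' (c j)
        = (nsq X : ℂ) := by rw [gram_expand2 ξ v c, ← hX, herm_self]
    have e2 : ∑ i, ∑ j, herm (Δ (z i) *ᵥ ξ i) (Δ (z j) *ᵥ ξ j) * herm (v i) (v j) * c i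
          * conj' (c j) = (nsq Y : ℂ) := by
      rw [gram_expand2 (fun j => Δ (z j) *ᵥ ξ j) v c, ← hY, herm_self]
    have split : ∑ i, ∑ j, (herm (ξ i) (ξ j) - herm (Δ (z i) *ᵥ ξ i) (Δ (z j) *ᵥ ξ j))
          * herm (v i) (v j) * c i * conj' (c j)
        = (∑ i, ∑ j, herm (ξ i) (ξ j) * herm (v i) (v j) * c i * conj' (c j))
          - ∑ i, ∑ j, herm (Δ (z i) *ᵥ ξ i) (Δ (z j) *ᵥ ξ j) * herm (v i) (v j) * c i
              * conj' (c j) := by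
      rw [← Finset.sum_sub_distrib]
      refine Finset.sum_congr rfl fun i _ => ?_
      rw [← Finset.sum_sub_distrib]
      exact Finset.sum_congr rfl fun j _ => by ring
    calc (0:ℂ) ≤ (nsq X : ℂ) - (nsq Y : ℂ) := zero_le_sub_real h1
      _ = ∑ i, ∑ j, (herm (ξ i) (ξ j) - herm (Δ (z i) *ᵥ ξ i) (Δ (z j) *ᵥ ξ j))
            * herm (v i) (v j) * c i * conj' (c j) := by rw [split, e1, e2]
  have hker := h z hz hne (fun i j => herm (v i) (v j)) hk hadm
  refine norm_le_one_of_nsq fT fun x => ?_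
  set P : Matrix (Fin 2) (Fin 2) ℂ := Matrix.of fun q j => v j q with hPdef
  have hA : LinearIndependent ℂ (fun i => Pᵀ i) := by convert hli using 1; rfl
  have hP : IsUnit P := Matrix.linearIndependent_cols_iff_isUnit.mp hA
  have hdet : IsUnit P.det := (Matrix.isUnit_iff_isUnit_det P).mp hP
  have hPP : P * P⁻¹ = 1 := Matrix.mul_nonsing_inv P hdet
  set c : Fin 2 → ℂ := P⁻¹ *ᵥ x with hc
  have hxdec : x = fun q => ∑ j, c j * v j q := by
    have h2 : (fun q => ∑ j, c j * v j q) = P *ᵥ c := by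
      funext q'
      simp only [Matrix.mulVec, dotProduct]
      exact Finset.sum_congr rfl fun j _ => by rw [mul_comm]; rfl
    rw [h2, hc, Matrix.mulVec_mulVec, hPP, Matrix.one_mulVec]
  have hxs : x = c 0 • v 0 + c 1 • v 1 := by
    rw [hxdec]; funext q; simp [Fin.sum_univ_two]
  have hfTx : fT *ᵥ x = fun q => ∑ j, (f (z j) * c j) * v j q := by
    rw [hxs, Matrix.mulVec_add, Matrix.mulVec_smul, Matrix.mulVec_smul, hfT 0, hfT 1]
    funext q
    simp only [Pi.add_apply, Pi.smul_apply, smul_eq_mul, Fin.sum_univ_two]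
    ring
  have hval := hker c
  have split2 : ∑ i, ∑ j, (1 - conj' (f (z j)) * f (z i)) * herm (v i) (v j) * c i * conj' (c j)
      = (∑ i, ∑ j, herm (v i) (v j) * c i * conj' (c j))
        - ∑ i, ∑ j, herm (v i) (v j) * (f (z i) * c i) * conj' (f (z j) * c j) := by
    rw [← Finset.sum_sub_distrib]
    refine Finset.sum_congr rfl fun i _ => ?_
    rw [← Finset.sum_sub_distrib]
    refine Finset.sum_congr rfl fun j _ => ?_
    rw [_root_.map_mul]; ring
  have e1 : ∑ i, ∑ j, herm (v i) (v j) * c i * conj' (c j) = (nsq x : ℂ) := by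
    rw [gram_expand v c, ← herm_self]
    congr 1 <;> exact hxdec.symm
  have e2 : ∑ i, ∑ j, herm (v i) (v j) * (f (z i) * c i) * conj' (f (z j) * c j)
      = (nsq (fT *ᵥ x) : ℂ) := by
    rw [gram_expand v (fun j => f (z j) * c j), ← herm_self]
    congr 1 <;> exact hfTx.symm
  refine sub_real_nonneg ?_
  calc (0:ℂ) ≤ ∑ i, ∑ j, (1 - conj' (f (z j)) * f (z i)) * herm (v i) (v j) * c i * conj' (c j) := by
        have hval2 : (0:ℂ) ≤ ∑ i, ∑ j,
            ((1 - conj' (f (z j)) * f (z i)) * herm (v i) (v j)) * c i * conj' (c j) := hval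
        refine le_trans hval2 (le_of_eq ?_)
        refine Finset.sum_congr rfl fun i _ => Finset.sum_congr rfl fun j _ => by ring
    _ = (nsq x : ℂ) - (nsq (fT *ᵥ x) : ℂ) := by rw [split2, e1, e2]

lemma psd2_eval (a : Fin 2 → Fin 2 → ℂ) (ha : PSD2 a) (c0 c1 : ℂ) :
    0 ≤ a 0 0 * c0 * conj' c0 + a 0 1 * c0 * conj' c1
      + a 1 0 * c1 * conj' c0 + a 1 1 * c1 * conj' c1 := by
  have := ha ![c0, c1]
  simpa [Fin.sum_univ_two, add_assoc] using this

lemma build_v (k : Fin 2 → Fin 2 → ℂ) (hk : PSD2 k) {ε : ℝ} (hε : 0 < ε) :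
    ∃ v : Fin 2 → Fin 2 → ℂ, LinearIndependent ℂ v ∧
      ∀ i j, herm (v i) (v j) = k i j + (if i = j then (ε:ℂ) else 0) := by
  -- basic facts
  have h00 := psd2_eval k hk 1 0
  have h11 := psd2_eval k hk 0 1
  simp at h00 h11
  have hk00re : 0 ≤ (k 0 0).re := (Complex.nonneg_iff.mp h00).1
  have hk00im : (k 0 0).im = 0 := ((Complex.nonneg_iff.mp h00).2).symm
  have hk11re : 0 ≤ (k 1 1).re := (Complex.nonneg_iff.mp h11).1
  have hk11im : (k 1 1).im = 0 := ((Complex.nonneg_iff.mp h11).2).symm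
  -- hermitian symmetry
  have hA := psd2_eval k hk 1 1
  have hB := psd2_eval k hk 1 Complex.I
  have hAim := (Complex.nonneg_iff.mp hA).2.symm
  have hBim := (Complex.nonneg_iff.mp hB).2.symm
  simp [Complex.add_im, Complex.mul_im, hk00im, hk11im] at hAim hBim
  have hherm : k 1 0 = conj' (k 0 1) := by
    apply Complex.ext
    · simp [Complex.conj_re]; linarith
    · simp [Complex.conj_im]; linarith
  have hk00 : k 0 0 = (((k 0 0).re : ℝ) : ℂ) := Complex.ext rfl (by simp [hk00im])
  have hk11 : k 1 1 = (((k 1 1).re : ℝ) : ℂ) := Complex.ext rfl (by simp [hk11im])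
  set b : ℂ := k 0 1 with hbdef
  set α : ℝ := (k 0 0).re + ε with hαdef
  have hα : 0 < α := by positivity
  set δ' : ℝ := ((k 1 1).re + ε) * α - Complex.normSq b with hδdef
  -- positivity of δ'
  have hS := psd2_eval k hk (-(conj' b)) (α : ℂ)
  have hSval : k 0 0 * (-(conj' b)) * conj' (-(conj' b)) + k 0 1 * (-(conj' b)) * conj' ((α:ℂ))
      + k 1 0 * ((α:ℂ)) * conj' (-(conj' b)) + k 1 1 * ((α:ℂ)) * conj' ((α:ℂ))
      = (((k 0 0).re * Complex.normSq b - 2 * α * Complex.normSq b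
          + (k 1 1).re * α * α : ℝ) : ℂ) := by
    rw [hk00, hk11, hherm]
    apply Complex.ext <;>
      simp [Complex.normSq_apply, Complex.add_re, Complex.add_im, Complex.mul_re,
        Complex.mul_im] <;> ring
  rw [hSval] at hS
  have hR : 0 ≤ (k 0 0).re * Complex.normSq b - 2 * α * Complex.normSq b
      + (k 1 1).re * α * α := Complex.zero_le_real.mp hS
  have hαδ : 0 < α * δ' := by
    have hnb : 0 ≤ Complex.normSq b := Complex.normSq_nonneg b
    have hid : α * δ' = ((k 0 0).re * Complex.normSq b - 2 * α * Complex.normSq b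
        + (k 1 1).re * α * α) + ε * Complex.normSq b + ε * (α * α) := by
      rw [hδdef]
      rw [hαdef]
      ring
    have h6 : 0 ≤ ε * Complex.normSq b := mul_nonneg hε.le hnb
    have h7 : 0 < ε * (α * α) := mul_pos hε (mul_pos hα hα)
    linarith
  have hδ : 0 < δ' := by
    have h5 : δ' = (α * δ') / α := by field_simp
    rw [h5]; exact div_pos hαδ hα
  -- the vectors
  set sa : ℝ := Real.sqrt α with hsadef
  set t : ℝ := Real.sqrt (δ' / α) with htdef
  have hsa2 : sa * sa = α := Real.mul_self_sqrt hα.le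
  have ht2 : t * t = δ' / α := Real.mul_self_sqrt (by positivity)
  have hsa0 : sa ≠ 0 := by positivity
  have ht0 : t ≠ 0 := by positivity
  have hsa0' : ((sa:ℝ):ℂ) ≠ 0 := by exact_mod_cast Complex.ofReal_ne_zero.mpr hsa0
  set v0 : Fin 2 → ℂ := ![(sa:ℂ), 0] with hv0def
  set v1 : Fin 2 → ℂ := ![conj' b / (sa:ℂ), (t:ℂ)] with hv1def
  have hermval : ∀ x0 x1 y0 y1 : ℂ, herm ![x0, x1] ![y0, y1] = x0 * conj' y0 + x1 * conj' y1 := by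
    intro x0 x1 y0 y1
    simp [herm, Fin.sum_univ_two]
  have hcb : conj' b * b = ((Complex.normSq b : ℝ) : ℂ) := by
    rw [mul_comm, Complex.mul_conj]
  have e00 : herm v0 v0 = k 0 0 + (ε:ℂ) := by
    rw [hv0def, hermval, hk00]
    simp [Complex.conj_ofReal]
    rw [← Complex.ofReal_mul, hsa2, hαdef]
    push_cast
    try ring
  have e01 : herm v0 v1 = k 0 1 := by
    rw [hv0def, hv1def, hermval]
    rw [map_div₀]
    simp [Complex.conj_ofReal, Complex.conj_conj]
    field_simp
    rfl
  have e10 : herm v1 v0 = k 1 0 := by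
    rw [hv0def, hv1def, hermval, hherm]
    simp [Complex.conj_ofReal]
    field_simp
  have e11 : herm v1 v1 = k 1 1 + (ε:ℂ) := by
    rw [hv1def, hermval, hk11, map_div₀]
    simp only [Complex.conj_conj, Complex.conj_ofReal]
    rw [div_mul_div_comm, hcb, ← Complex.ofReal_mul, ← Complex.ofReal_mul, hsa2, ht2]
    rw [← Complex.ofReal_div, ← Complex.ofReal_add, ← Complex.ofReal_add]
    congr 1
    rw [hδdef]
    field_simp
    try ring
  refine ⟨![v0, v1], ?_, ?_⟩
  · rw [linearIndependent_fin2]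
    constructor
    · intro hcon
      have h1 := congrFun hcon 1
      rw [hv1def] at h1
      simp at h1
      exact ht0 (by exact_mod_cast h1)
    · intro a hcon
      have h1 := congrFun hcon 1
      rw [hv0def, hv1def] at h1
      simp at h1
      have ha0 : a = 0 := by
        rcases h1 with h1 | h1
        · exact h1
        · exact absurd (by exact_mod_cast h1) ht0
      have h0 := congrFun hcon 0
      rw [ha0, hv0def, hv1def] at h0
      simp at h0
      exact hsa0 (by exact_mod_cast h0.symm)
  · intro i j
    fin_cases i <;> fin_cases j
    · simpa using e00
    · simpa using e01
    · simpa using e10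
    · simpa using e11

lemma eigen_mulVec (P : Matrix (Fin 2) (Fin 2) ℂ) (hdet : IsUnit P.det)
    (w : Fin 2 → ℂ) (j : Fin 2) :
    (P * Matrix.diagonal w * P⁻¹) *ᵥ (fun q => P q j) = w j • (fun q => P q j) := by
  have h1 : (fun q => P q j) = P *ᵥ Pi.single j 1 := by
    funext q
    rw [Matrix.mulVec_single]
    exact (mul_one _).symm
  rw [h1, Matrix.mulVec_mulVec]
  have h2 : P * Matrix.diagonal w * P⁻¹ * P = P * Matrix.diagonal w := by
    rw [mul_assoc, Matrix.nonsing_inv_mul P hdet, mul_one]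
  rw [h2, ← Matrix.mulVec_mulVec, Matrix.diagonal_mulVec_single]
  funext q
  have h3 : (Pi.single j (w j * 1) : Fin 2 → ℂ) = w j • (Pi.single j 1 : Fin 2 → ℂ) := by
    rw [mul_one]
    funext q'
    by_cases hq : q' = j
    · subst hq; simp
    · simp [Pi.single_eq_of_ne hq]
  rw [h3, Matrix.mulVec_smul]

lemma tpr_mulVec_decomp {s' r' : ℕ} (A : Matrix (Fin s') (Fin r') ℂ)
    (ξ : Fin r' → ℂ) (w : Fin 2 → ℂ) :
    tpr (A *ᵥ ξ) w = ∑ i, ξ i • tpr (A *ᵥ Pi.single i 1) w := by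
  funext p
  simp only [tpr, Finset.sum_apply, Pi.smul_apply, smul_eq_mul, Matrix.mulVec_single, mul_one]
  simp only [Matrix.mulVec, dotProduct, Finset.sum_mul, MulOpposite.op_one, one_smul, Matrix.col_apply]
  exact Finset.sum_congr rfl fun i _ => by ring


lemma dir_mp {d s r : ℕ} (E : Set (Fin d → ℂ))
    (Δ : (Fin d → ℂ) → Matrix (Fin s) (Fin r) ℂ) (f : (Fin d → ℂ) → ℂ)
    (h : MemS2gen E Δ f) :
    ∀ zz : Fin 2 → (Fin d → ℂ), (∀ j, zz j ∈ BDelta E Δ) → zz 0 ≠ zz 1 →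
        ∀ k : Fin 2 → Fin 2 → ℂ, PSD2 k →
          (∀ ξ : Fin 2 → (Fin r → ℂ),
            PSD2 fun i j =>
              (herm (ξ i) (ξ j) - herm (Δ (zz i) *ᵥ ξ i) (Δ (zz j) *ᵥ ξ j)) * k i j) →
          PSD2 fun i j => (1 - conj' (f (zz j)) * f (zz i)) * k i j := by
  intro zz hzz hne k hk hadm c
  have key : ∀ ε : ℝ, 0 < ε →
      (0:ℂ) ≤ ∑ i, ∑ j, ((1 - conj' (f (zz j)) * f (zz i))
        * (k i j + (if i = j then (ε:ℂ) else 0))) * c i * conj' (c j) := by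
    intro ε hε
    obtain ⟨v, hvli, hgram⟩ := build_v k hk hε
    set P : Matrix (Fin 2) (Fin 2) ℂ := Matrix.of fun q j => v j q with hPdef
    have hA : LinearIndependent ℂ (fun i => Pᵀ i) := by convert hvli using 1; rfl
    have hP : IsUnit P := Matrix.linearIndependent_cols_iff_isUnit.mp hA
    have hdet : IsUnit P.det := (Matrix.isUnit_iff_isUnit_det P).mp hP
    have hPPinv : P * P⁻¹ = 1 := Matrix.mul_nonsing_inv P hdet
    have hvP : ∀ j, v j = fun q => P q j := fun j => rfl
    set T : Fin d → Matrix (Fin 2) (Fin 2) ℂ :=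
      fun i => P * Matrix.diagonal (fun j => zz j i) * P⁻¹ with hT
    have hTv : ∀ i j, T i *ᵥ v j = zz j i • v j := by
      intro i j
      rw [hvP j]
      exact eigen_mulVec P hdet _ j
    set fT : Matrix (Fin 2) (Fin 2) ℂ := P * Matrix.diagonal (fun j => f (zz j)) * P⁻¹
      with hfTdef
    have hfT : ∀ j, fT *ᵥ v j = f (zz j) • v j := by
      intro j; rw [hvP j]; exact eigen_mulVec P hdet _ j
    -- Δ-contractivity of every intertwiner
    have hDT : DeltaTContract Δ v zz := by
      intro DT hsingle
      have hgen : ∀ (ξ : Fin r → ℂ) j, DT *ᵥ tpr ξ (v j) = tpr (Δ (zz j) *ᵥ ξ) (v j) := by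
        intro ξ j
        rw [tpr_decomp ξ (v j), ← Matrix.mulVecLin_apply, map_sum]
        rw [tpr_mulVec_decomp (Δ (zz j)) ξ (v j)]
        refine Finset.sum_congr rfl fun i _ => ?_
        rw [LinearMap.map_smul, Matrix.mulVecLin_apply, hsingle i j]
      refine norm_le_one_of_nsq DT fun x => ?_
      set ξ : Fin 2 → Fin r → ℂ := fun j p1 => ∑ q, P⁻¹ j q * x (p1, q) with hξ
      have hdec : x = fun p => ∑ j, tpr (ξ j) (v j) p := by
        funext p
        calc x p = ∑ q, (P * P⁻¹) p.2 q * x (p.1, q) := by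
              rw [hPPinv]
              simp only [Matrix.one_apply, ite_mul, one_mul, zero_mul]
              rw [Finset.sum_ite_eq Finset.univ p.2 (fun q => x (p.1, q))]
              simp
          _ = ∑ j, tpr (ξ j) (v j) p := by
              simp only [Matrix.mul_apply, Finset.sum_mul, tpr, hξ]
              rw [Finset.sum_comm]
              refine Finset.sum_congr rfl fun j _ => ?_
              refine Finset.sum_congr rfl fun q _ => ?_
              have : v j p.2 = P p.2 j := rfl
              rw [this]
              ring
      have hxsum : x = tpr (ξ 0) (v 0) + tpr (ξ 1) (v 1) := by
        rw [hdec]; funext p; simp [Fin.sum_univ_two]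
      have hDx : DT *ᵥ x = fun p => ∑ j, tpr (Δ (zz j) *ᵥ ξ j) (v j) p := by
        rw [hxsum, Matrix.mulVec_add, hgen (ξ 0) 0, hgen (ξ 1) 1]
        funext p; simp [Fin.sum_univ_two]
      -- now the quantitative bound via the admissibility hypothesis
      set X : Fin r × Fin 2 → ℂ := fun p => ∑ j, (1:ℂ) * tpr (ξ j) (v j) p with hX
      set Y : Fin s × Fin 2 → ℂ := fun p => ∑ j, (1:ℂ) * tpr (Δ (zz j) *ᵥ ξ j) (v j) p with hY
      have hxX : x = X := by
        rw [hdec, hX]; funext p; simp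
      have hDY : DT *ᵥ x = Y := by
        rw [hDx, hY]; funext p; simp
      have hadm1 := hadm ξ (fun _ => (1:ℂ))
      have hdiag : ∀ i : Fin 2, (0:ℂ) ≤ herm (ξ i) (ξ i)
          - herm (Δ (zz i) *ᵥ ξ i) (Δ (zz i) *ᵥ ξ i) := by
        intro i
        rw [herm_self, herm_self]
        exact zero_le_sub_real (mulVec_nsq_le (Δ (zz i)) (le_of_lt (hzz i).2) (ξ i))
      have hεdiag : ∀ i : Fin 2, (0:ℂ) ≤ (ε:ℂ) * (herm (ξ i) (ξ i)
          - herm (Δ (zz i) *ᵥ ξ i) (Δ (zz i) *ᵥ ξ i)) := by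
        intro i
        rw [herm_self, herm_self, ← Complex.ofReal_sub, ← Complex.ofReal_mul]
        refine Complex.zero_le_real.mpr (mul_nonneg hε.le ?_)
        have := mulVec_nsq_le (Δ (zz i)) (le_of_lt (hzz i).2) (ξ i)
        linarith
      -- split the ε-perturbed admissibility sum
      have hsplitε : ∑ i, ∑ j, (herm (ξ i) (ξ j) - herm (Δ (zz i) *ᵥ ξ i) (Δ (zz j) *ᵥ ξ j))
            * herm (v i) (v j) * (1:ℂ) * conj' (1:ℂ)
          = (∑ i, ∑ j, ((herm (ξ i) (ξ j) - herm (Δ (zz i) *ᵥ ξ i) (Δ (zz j) *ᵥ ξ j)) * k i j)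
              * (1:ℂ) * conj' (1:ℂ))
            + ((ε:ℂ) * (herm (ξ 0) (ξ 0) - herm (Δ (zz 0) *ᵥ ξ 0) (Δ (zz 0) *ᵥ ξ 0))
              + (ε:ℂ) * (herm (ξ 1) (ξ 1) - herm (Δ (zz 1) *ᵥ ξ 1) (Δ (zz 1) *ᵥ ξ 1))) := by
        simp only [Fin.sum_univ_two, hgram]
        norm_num
        ring
      have hposε : (0:ℂ) ≤ ∑ i, ∑ j, (herm (ξ i) (ξ j)
            - herm (Δ (zz i) *ᵥ ξ i) (Δ (zz j) *ᵥ ξ j))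
            * herm (v i) (v j) * (1:ℂ) * conj' (1:ℂ) := by
        rw [hsplitε]
        have h1 : (0:ℂ) ≤ ∑ i, ∑ j, ((herm (ξ i) (ξ j)
            - herm (Δ (zz i) *ᵥ ξ i) (Δ (zz j) *ᵥ ξ j)) * k i j)
              * (1:ℂ) * conj' (1:ℂ) := hadm1
        have h2 := hεdiag 0
        have h3 := hεdiag 1
        have h4 := add_le_add (add_le_add h1 h2) h3
        refine le_trans (le_of_eq (by ring : (0:ℂ) = 0 + 0 + 0)) (le_trans h4 (le_of_eq (by ring)))
      -- identify with nsq X - nsq Y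
      have e1 : ∑ i, ∑ j, herm (ξ i) (ξ j) * herm (v i) (v j) * (1:ℂ) * conj' (1:ℂ)
          = (nsq X : ℂ) := by
        rw [gram_expand2 ξ v (fun _ => (1:ℂ)), ← hX, herm_self]
      have e2 : ∑ i, ∑ j, herm (Δ (zz i) *ᵥ ξ i) (Δ (zz j) *ᵥ ξ j) * herm (v i) (v j)
            * (1:ℂ) * conj' (1:ℂ) = (nsq Y : ℂ) := by
        rw [gram_expand2 (fun j => Δ (zz j) *ᵥ ξ j) v (fun _ => (1:ℂ)), ← hY, herm_self]
      have hsplit2 : ∑ i, ∑ j, (herm (ξ i) (ξ j) - herm (Δ (zz i) *ᵥ ξ i) (Δ (zz j) *ᵥ ξ j))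
            * herm (v i) (v j) * (1:ℂ) * conj' (1:ℂ)
          = (∑ i, ∑ j, herm (ξ i) (ξ j) * herm (v i) (v j) * (1:ℂ) * conj' (1:ℂ))
            - ∑ i, ∑ j, herm (Δ (zz i) *ᵥ ξ i) (Δ (zz j) *ᵥ ξ j) * herm (v i) (v j)
                * (1:ℂ) * conj' (1:ℂ) := by
        rw [← Finset.sum_sub_distrib]
        refine Finset.sum_congr rfl fun i _ => ?_
        rw [← Finset.sum_sub_distrib]
        exact Finset.sum_congr rfl fun j _ => by ring
      have hfin : (0:ℂ) ≤ (nsq X : ℂ) - (nsq Y : ℂ) := by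
        rw [← e1, ← e2, ← hsplit2]
        exact hposε
      have h7 := sub_real_nonneg hfin
      rw [hDY, hxX]
      exact h7
    -- apply membership in the Schur class
    have hnorm : ‖fT‖ ≤ 1 := h T v zz ⟨hvli, hne, hTv⟩ hzz hDT fT hfT
    -- final positivity for the ε-perturbed kernel
    set w : Fin 2 → ℂ := fun q => ∑ j, c j * v j q with hw
    have hwsum : w = c 0 • v 0 + c 1 • v 1 := by
      rw [hw]; funext q; simp [Fin.sum_univ_two]
    have hfTw : fT *ᵥ w = fun q => ∑ j, (f (zz j) * c j) * v j q := by
      rw [hwsum, Matrix.mulVec_add, Matrix.mulVec_smul, Matrix.mulVec_smul, hfT 0, hfT 1]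
      funext q
      simp only [Pi.add_apply, Pi.smul_apply, smul_eq_mul, Fin.sum_univ_two]
      ring
    have e1 : ∑ i, ∑ j, herm (v i) (v j) * c i * conj' (c j) = (nsq w : ℂ) := by
      rw [gram_expand v c, ← hw, herm_self]
    have e2 : ∑ i, ∑ j, herm (v i) (v j) * (f (zz i) * c i) * conj' (f (zz j) * c j)
        = (nsq (fT *ᵥ w) : ℂ) := by
      rw [gram_expand v (fun j => f (zz j) * c j), ← herm_self]
      congr 1 <;> exact hfTw.symm
    have split2 : ∑ i, ∑ j, (1 - conj' (f (zz j)) * f (zz i)) * herm (v i) (v j) * c i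
          * conj' (c j)
        = (∑ i, ∑ j, herm (v i) (v j) * c i * conj' (c j))
          - ∑ i, ∑ j, herm (v i) (v j) * (f (zz i) * c i) * conj' (f (zz j) * c j) := by
      rw [← Finset.sum_sub_distrib]
      refine Finset.sum_congr rfl fun i _ => ?_
      rw [← Finset.sum_sub_distrib]
      refine Finset.sum_congr rfl fun j _ => ?_
      rw [_root_.map_mul]; ring
    have hval : (0:ℂ) ≤ ∑ i, ∑ j, (1 - conj' (f (zz j)) * f (zz i)) * herm (v i) (v j) * c i
        * conj' (c j) := by
      rw [split2, e1, e2]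
      exact zero_le_sub_real (mulVec_nsq_le fT hnorm w)
    refine le_trans hval (le_of_eq ?_)
    refine Finset.sum_congr rfl fun i _ => Finset.sum_congr rfl fun j _ => ?_
    rw [hgram i j]
  -- now let ε → 0
  set V : ℂ := ∑ i, ∑ j, ((1 - conj' (f (zz j)) * f (zz i)) * k i j) * c i * conj' (c j) with hV
  set D : ℂ := (1 - conj' (f (zz 0)) * f (zz 0)) * c 0 * conj' (c 0)
    + (1 - conj' (f (zz 1)) * f (zz 1)) * c 1 * conj' (c 1) with hD
  have hVD : ∀ ε : ℝ, ∑ i, ∑ j, ((1 - conj' (f (zz j)) * f (zz i))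
        * (k i j + (if i = j then (ε:ℂ) else 0))) * c i * conj' (c j) = V + (ε:ℂ) * D := by
    intro ε
    rw [hV, hD]
    simp only [Fin.sum_univ_two]
    norm_num
    ring
  have key2 : ∀ ε : ℝ, 0 < ε → (0:ℂ) ≤ V + (ε:ℂ) * D := by
    intro ε hε
    rw [← hVD ε]
    exact key ε hε
  have him : V.im = 0 ∧ D.im = 0 := by
    have h1 := (Complex.nonneg_iff.mp (key2 1 one_pos)).2
    have h2 := (Complex.nonneg_iff.mp (key2 2 two_pos)).2
    simp [Complex.add_im, Complex.mul_im] at h1 h2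
    constructor <;> linarith
  have hre : 0 ≤ V.re := by
    refine le_of_forall_pos_le_add fun η hη => ?_
    have hεpos : 0 < η / (|D.re| + 1) := by positivity
    have h1 := (Complex.nonneg_iff.mp (key2 _ hεpos)).1
    simp only [Complex.add_re, Complex.mul_re, Complex.ofReal_re, Complex.ofReal_im,
      zero_mul, sub_zero] at h1
    have h2 : (η / (|D.re| + 1)) * D.re ≤ η := by
      have h3 : D.re ≤ |D.re| := le_abs_self _
      have h4 : 0 ≤ |D.re| := abs_nonneg _
      have h5 : (η / (|D.re| + 1)) * D.re ≤ (η / (|D.re| + 1)) * |D.re| :=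
        mul_le_mul_of_nonneg_left h3 hεpos.le
      have h6 : (η / (|D.re| + 1)) * |D.re| ≤ η := by
        rw [div_mul_eq_mul_div, div_le_iff₀ (by positivity)]
        nlinarith
      linarith
    linarith
  have : (0:ℂ) ≤ V := Complex.nonneg_iff.mpr ⟨hre, him.1.symm⟩
  exact this

/-- **Theorem 4.1, (1) ⇔ (2)**: `f ∈ S_{2,gen}(B_Δ)` iff over every pair of distinct points of
`B_Δ`, `f` maps every `Δ`-admissible positive semidefinite kernel to a positive semidefinite
kernel. -/
theorem memS2gen_iff_admissible_kernels {d s r : ℕ} (E : Set (Fin d → ℂ))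
    (Δ : (Fin d → ℂ) → Matrix (Fin s) (Fin r) ℂ)
    (hE : ∃ z w, z ∈ BDelta E Δ ∧ w ∈ BDelta E Δ ∧ z ≠ w)
    (f : (Fin d → ℂ) → ℂ) :
    MemS2gen E Δ f ↔
      ∀ zz : Fin 2 → (Fin d → ℂ), (∀ j, zz j ∈ BDelta E Δ) → zz 0 ≠ zz 1 →
        ∀ k : Fin 2 → Fin 2 → ℂ, PSD2 k →
          (∀ ξ : Fin 2 → (Fin r → ℂ),
            PSD2 fun i j =>
              (herm (ξ i) (ξ j) - herm (Δ (zz i) *ᵥ ξ i) (Δ (zz j) *ᵥ ξ j)) * k i j) →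
          PSD2 fun i j => (1 - (starRingEnd ℂ) (f (zz j)) * f (zz i)) * k i j := by
  exact ⟨fun hmem => dir_mp E Δ f hmem, fun hcond => dir_mpr E Δ f hcond⟩
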